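/- Let K be a field and let T = fromBlocks A C 0 B be a block upper-triangular square matrix over K, where A is m×m, B is n×n and C is m×n. If T is regular (its minimal polynomial equals its characteristic polynomial), then both A and B are regular. -/
import Mathlib

open Polynomial Matrix

private lemma aeval_fromBlocks_exists {K : Type*} [Field K] {m n : ℕ}
    (A : Matrix (Fin m) (Fin m) K) (B : Matrix (Fin n) (Fin n) K)
    (C : Matrix (Fin m) (Fin n) K) (p : K[X]) :
    ∃ D, (aeval (Matrix.fromBlocks A C 0 B)) p =
      Matrix.fromBlocks (aeval A p) D 0 (aeval B p) := by
  induction p using Polynomial.induction_on with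
  | C a =>
      refine ⟨0, ?_⟩
      ext i j
      rcases i with i | i <;> rcases j with j | j <;>
        simp [Matrix.algebraMap_eq_diagonal, Matrix.diagonal, Matrix.fromBlocks]
  | add p q hp hq =>
      obtain ⟨D1, h1⟩ := hp
      obtain ⟨D2, h2⟩ := hq
      exact ⟨D1 + D2, by simp [h1, h2, Matrix.fromBlocks_add]⟩
  | monomial k a ih =>
      obtain ⟨D, hD⟩ := ih
      refine ⟨D * B + aeval A (Polynomial.C a * X ^ k) * C, ?_⟩
      have hT' : (aeval (Matrix.fromBlocks A C 0 B)) (Polynomial.C a * X ^ (k + 1)) =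
          Matrix.fromBlocks (aeval A (Polynomial.C a * X ^ k)) D 0
            (aeval B (Polynomial.C a * X ^ k)) * Matrix.fromBlocks A C 0 B := by
        rw [pow_succ, ← mul_assoc, _root_.map_mul, aeval_X, hD]
      have hA' : (aeval A) (Polynomial.C a * X ^ (k + 1)) =
          aeval A (Polynomial.C a * X ^ k) * A := by
        rw [pow_succ, ← mul_assoc, _root_.map_mul, aeval_X]
      have hB' : (aeval B) (Polynomial.C a * X ^ (k + 1)) =
          aeval B (Polynomial.C a * X ^ k) * B := by
        rw [pow_succ, ← mul_assoc, _root_.map_mul, aeval_X]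
      rw [hT', hA', hB', Matrix.fromBlocks_multiply]
      simp [add_comm]

/-- If a block upper-triangular matrix `fromBlocks A C 0 B` over a field is regular
(its minimal polynomial equals its characteristic polynomial), then both diagonal
blocks `A` and `B` are regular. -/
theorem regular_blocks_of_regular_blockTriangular (K : Type*) [Field K] (m n : ℕ)
    (A : Matrix (Fin m) (Fin m) K) (B : Matrix (Fin n) (Fin n) K)
    (C : Matrix (Fin m) (Fin n) K)
    (hT : minpoly K (Matrix.fromBlocks A C 0 B) =
      (Matrix.fromBlocks A C 0 B).charpoly) :
    minpoly K A = A.charpoly ∧ minpoly K B = B.charpoly := by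
  set T := Matrix.fromBlocks A C 0 B with hTdef
  -- minpoly A and minpoly B divide their charpolys
  have hAdvd : minpoly K A ∣ A.charpoly := minpoly.dvd K A A.aeval_self_charpoly
  have hBdvd : minpoly K B ∣ B.charpoly := minpoly.dvd K B B.aeval_self_charpoly
  have hAint : IsIntegral K A := ⟨A.charpoly, A.charpoly_monic, A.aeval_self_charpoly⟩
  have hBint : IsIntegral K B := ⟨B.charpoly, B.charpoly_monic, B.aeval_self_charpoly⟩
  have hmA : (minpoly K A).Monic := minpoly.monic hAint
  have hmB : (minpoly K B).Monic := minpoly.monic hBint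
  -- minpoly T divides minpoly A * minpoly B
  have key : aeval T (minpoly K A * minpoly K B) = 0 := by
    obtain ⟨D1, h1⟩ := aeval_fromBlocks_exists A B C (minpoly K A)
    obtain ⟨D2, h2⟩ := aeval_fromBlocks_exists A B C (minpoly K B)
    rw [_root_.map_mul, h1, h2, minpoly.aeval, minpoly.aeval, Matrix.fromBlocks_multiply]
    simp
  have hTdvd : T.charpoly ∣ minpoly K A * minpoly K B := by
    rw [← hT]; exact minpoly.dvd K T key
  have hcharT : T.charpoly = A.charpoly * B.charpoly :=
    Matrix.charpoly_fromBlocks_zero₂₁ A C B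
  -- degree comparison
  have hmul_ne : minpoly K A * minpoly K B ≠ 0 := (hmA.mul hmB).ne_zero
  have hdeg : (A.charpoly * B.charpoly).natDegree ≤
      (minpoly K A * minpoly K B).natDegree := by
    rw [← hcharT]
    exact Polynomial.natDegree_le_of_dvd hTdvd hmul_ne
  have hdA : (minpoly K A).natDegree ≤ A.charpoly.natDegree :=
    Polynomial.natDegree_le_of_dvd hAdvd A.charpoly_monic.ne_zero
  have hdB : (minpoly K B).natDegree ≤ B.charpoly.natDegree :=
    Polynomial.natDegree_le_of_dvd hBdvd B.charpoly_monic.ne_zero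
  rw [Polynomial.natDegree_mul A.charpoly_monic.ne_zero B.charpoly_monic.ne_zero,
    Polynomial.natDegree_mul hmA.ne_zero hmB.ne_zero] at hdeg
  have hA' : A.charpoly.natDegree ≤ (minpoly K A).natDegree := by omega
  have hB' : B.charpoly.natDegree ≤ (minpoly K B).natDegree := by omega
  constructor
  · exact (Polynomial.eq_of_monic_of_dvd_of_natDegree_le hmA A.charpoly_monic hAdvd hA').symm
  · exact (Polynomial.eq_of_monic_of_dvd_of_natDegree_le hmB B.charpoly_monic hBdvd hB').symm
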